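/- Every free abelian group K is weakly-α-separable for every infinite cardinal α: any subgroup K₁ of K of cardinality ≤ α is contained in a direct summand K₂ of K of cardinality ≤ α. -/

import Mathlib

open Cardinal

/-- Every free abelian group is weakly-α-separable for every infinite cardinal α:
any subgroup of cardinality ≤ α is contained in a direct summand of cardinality ≤ α. -/
theorem free_abelian_weakly_separable
    (K : Type*) [AddCommGroup K] [Module.Free ℤ K]
    (α : Cardinal) (hα : Cardinal.aleph0 ≤ α)
    (K₁ : AddSubgroup K) (hK₁ : Cardinal.mk K₁ ≤ α) :
    ∃ K₂ : AddSubgroup K, K₁ ≤ K₂ ∧ Cardinal.mk K₂ ≤ α ∧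
      ∃ F : AddSubgroup K, IsCompl K₂ F := by
  classical
  set I := Module.Free.ChooseBasisIndex ℤ K
  set b : Module.Basis I ℤ K := Module.Free.chooseBasis ℤ K
  -- the set of basis indices appearing in supports of elements of K₁
  set S : Set I := ⋃ x : K₁, ((b.repr (x : K)).support : Set I) with hS
  have hScard : Cardinal.mk S ≤ α := by
    calc Cardinal.mk S ≤ Cardinal.mk K₁ * ⨆ x : K₁, #((b.repr (x : K)).support : Set I) :=
          Cardinal.mk_iUnion_le _
      _ ≤ α * Cardinal.aleph0 := by
          refine mul_le_mul' hK₁ (ciSup_le' fun x => ?_)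
          exact le_of_lt (Cardinal.lt_aleph0_of_finite _)
      _ ≤ α * α := mul_le_mul' le_rfl hα
      _ = α := Cardinal.mul_eq_self hα
  -- submodules of the finsupp model
  set P : Submodule ℤ (I →₀ ℤ) := Finsupp.supported ℤ ℤ S
  set Q : Submodule ℤ (I →₀ ℤ) := Finsupp.supported ℤ ℤ Sᶜ
  have hPQ : IsCompl P Q := by
    constructor
    · exact Finsupp.disjoint_supported_supported disjoint_compl_right
    · rw [codisjoint_iff, ← Finsupp.supported_union, Set.union_compl_self,
        Finsupp.supported_univ]
  -- transfer to K via the basis repr equivalence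
  set e : Submodule ℤ (I →₀ ℤ) ≃o Submodule ℤ K := Submodule.orderIsoMapComap b.repr.symm
  have hcompl : IsCompl (e P) (e Q) := e.isCompl hPQ
  refine ⟨AddSubgroup.toIntSubmodule.symm (e P), ?_, ?_, AddSubgroup.toIntSubmodule.symm (e Q),
    AddSubgroup.toIntSubmodule.symm.isCompl hcompl⟩
  · -- K₁ ≤ K₂
    intro x hx
    have hmem : b.repr x ∈ P := by
      rw [Finsupp.mem_supported, hS]
      exact Set.subset_iUnion (fun y : K₁ => (((b.repr (y : K)).support : Set I))) ⟨x, hx⟩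
    have hx2 : x ∈ (e P : Submodule ℤ K) :=
      Submodule.mem_map.2 ⟨b.repr x, hmem, b.repr.symm_apply_apply x⟩
    exact hx2
  · -- cardinality bound
    have e1 : (e P : Submodule ℤ K) ≃ₗ[ℤ] P := (b.repr.symm.submoduleMap P).symm
    have e2 : P ≃ₗ[ℤ] (S →₀ ℤ) := Finsupp.supportedEquivFinsupp S
    have : Cardinal.mk (e P : Submodule ℤ K) = Cardinal.mk (S →₀ ℤ) :=
      Cardinal.mk_congr (e1.toEquiv.trans e2.toEquiv)
    rw [show (Cardinal.mk (AddSubgroup.toIntSubmodule.symm (e P)) : Cardinal)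
        = Cardinal.mk (e P : Submodule ℤ K) from rfl, this]
    rcases isEmpty_or_nonempty S with h | h
    · simpa using Cardinal.one_le_aleph0.trans hα
    · calc Cardinal.mk (S →₀ ℤ) ≤ max (Cardinal.mk S) Cardinal.aleph0 := by
            have := Cardinal.mk_finsupp_lift_of_infinite' S ℤ
            simp only [Cardinal.lift_id, Cardinal.lift_uzero] at this
            rw [this]
            simp [Cardinal.mk_int]
        _ ≤ α := max_le hScard hα
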